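/- Let s be a binary string of length l, s^{(1)} its expansion, and let x_1 < ... < x_k be a monochromatic D-diffsequence in {1,...,4l} of color c ∈ {0,1} under s^{(1)} (i.e., s^{(1)}_{x_i} = c for all i). Then there exists a nonnegative integer m ≤ k such that for every j ∈ {1,...,k}, s_{pos(x_j)} = 1 - c if and only if j ≤ m. -/
import Mathlib


/-- The set of powers of two. -/
def D : Set ℕ := {d | ∃ i : ℕ, d = 2 ^ i}

/-- `pos i = ⌈i / 4⌉`. -/
def pos (i : ℕ) : ℕ := (i + 3) / 4

/-- The expansion of a binary string: each `0` becomes `0011`, each `1` becomes `1100`.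
For `1 ≤ m`, `s⁽¹⁾_m = s_{⌈m/4⌉}` if `m % 4 ∈ {1,2}` and `1 - s_{⌈m/4⌉}` otherwise. -/
def expand (s : ℕ → Fin 2) : ℕ → Fin 2 :=
  fun m => if m % 4 = 1 ∨ m % 4 = 2 then s (pos m) else 1 - s (pos m)

/-- `a 0 < a 1 < ⋯ < a (k-1)` is a `D`-diffsequence contained in `{1, …, n}`. -/
def IsDiffseqIn (n k : ℕ) (a : ℕ → ℕ) : Prop :=
  (∀ i < k, 1 ≤ a i ∧ a i ≤ n) ∧
    ∀ i, i + 1 < k → a i < a (i + 1) ∧ a (i + 1) - a i ∈ D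

/-- The set of hops of a length-`k` diffsequence `a` with respect to the string `s`:
indices `j` (0-based) with `a (j+1) - a j = 1` and `s (a (j+1)) ≠ s (a j)`. -/
def hops (s : ℕ → Fin 2) (k : ℕ) (a : ℕ → ℕ) : Finset ℕ :=
  (Finset.range (k - 1)).filter fun j => a (j + 1) = a j + 1 ∧ s (a (j + 1)) ≠ s (a j)

/-- `psi s n h` : the maximum length of a `D`-diffsequence contained in `{1, …, n}`
with at most `h` hops with respect to `s` (0 if there is none). -/
noncomputable def psi (s : ℕ → Fin 2) (n h : ℕ) : ℕ :=
  sSup {k | ∃ a : ℕ → ℕ, IsDiffseqIn n k a ∧ (hops s k a).card ≤ h}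


lemma fin2_ne_iff (c d : Fin 2) (h : d ≠ c) : d = 1 - c := by
  fin_cases c <;> fin_cases d <;> simp_all

lemma one_sub_ne (c : Fin 2) : (1 - c : Fin 2) ≠ c := by fin_cases c <;> decide

lemma step_lemma (s : ℕ → Fin 2) (c : Fin 2) (m m' : ℕ) (hlt : m < m')
    (hd : m' - m ∈ D) (h1 : expand s m = c) (h2 : expand s m' = c)
    (hc : s (pos m) = c) : s (pos m') = c := by
  obtain ⟨i, hi⟩ := hd
  have hm' : m' = m + 2 ^ i := by omega
  have hmod : m % 4 = 1 ∨ m % 4 = 2 := by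
    by_contra h
    rw [expand, if_neg h] at h1
    rw [hc] at h1
    have : (1 - c : Fin 2) ≠ c := one_sub_ne c
    fin_cases c <;> simp_all
  rcases Nat.lt_or_ge i 2 with hi2 | hi2
  · interval_cases i
    · -- d = 1
      rcases hmod with h1m | h2m
      · have : m' % 4 = 2 := by omega
        rw [expand, if_pos (Or.inr this)] at h2
        exact h2
      · -- m % 4 = 2, m' = m+1, same block, contradiction
        have hpos : pos m' = pos m := by unfold pos; omega
        have : ¬ (m' % 4 = 1 ∨ m' % 4 = 2) := by omega
        rw [expand, if_neg this, hpos, hc] at h2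
        exact absurd h2 (one_sub_ne c)
    · -- d = 2
      have hpos : pos m' = pos m := by unfold pos; omega
      have : ¬ (m' % 4 = 1 ∨ m' % 4 = 2) := by omega
      rw [expand, if_neg this, hpos, hc] at h2
      exact absurd h2 (one_sub_ne c)
  · have h4 : 2 ^ i % 4 = 0 := by
      have : (4 : ℕ) ∣ 2 ^ i := by
        have : (2:ℕ)^2 ∣ 2 ^ i := pow_dvd_pow 2 hi2
        simpa using this
      omega
    have : m' % 4 = 1 ∨ m' % 4 = 2 := by omega
    rw [expand, if_pos this] at h2
    exact h2

theorem stmt_2 (l k : ℕ) (s : ℕ → Fin 2) (x : ℕ → ℕ) (c : Fin 2)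
    (hdiff : IsDiffseqIn (4 * l) k x)
    (hmono : ∀ i < k, expand s (x i) = c) :
    ∃ m ≤ k, ∀ j < k, (s (pos (x j)) = 1 - c ↔ j < m) := by
  classical
  -- Q j : the bit at pos (x j) is c
  set Q : ℕ → Prop := fun j => s (pos (x j)) = c with hQ
  have hstep : ∀ j, j + 1 < k → Q j → Q (j + 1) := by
    intro j hj hq
    exact step_lemma s c (x j) (x (j+1)) (hdiff.2 j hj).1 (hdiff.2 j hj).2
      (hmono j (by omega)) (hmono (j+1) hj) hq
  have hprop : ∀ t, t < k → Q t → ∀ j, t ≤ j → j < k → Q j := by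
    intro t ht hq j hle hjk
    induction j, hle using Nat.le_induction with
    | base => exact hq
    | succ n hn ih => exact hstep n hjk (ih (by omega))
  have hnotQ : ∀ j, j < k → ¬ Q j → s (pos (x j)) = 1 - c := by
    intro j hj h
    exact fin2_ne_iff c _ h
  by_cases hex : ∃ j, j < k ∧ Q j
  · obtain ⟨j0, hj0k, hj0Q⟩ := hex
    have hex' : ∃ j, j < k ∧ Q j := ⟨j0, hj0k, hj0Q⟩
    refine ⟨Nat.find hex', (Nat.find_spec hex').1.le, ?_⟩
    intro j hj
    constructor
    · intro h
      by_contra hlt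
      push_neg at hlt
      have hQj : Q j := hprop _ (Nat.find_spec hex').1 (Nat.find_spec hex').2 j hlt hj
      rw [hQ] at hQj
      rw [hQj] at h
      exact one_sub_ne c h.symm
    · intro hlt
      have : ¬ (j < k ∧ Q j) := Nat.find_min hex' hlt
      exact hnotQ j hj (fun hq => this ⟨hj, hq⟩)
  · push_neg at hex
    refine ⟨k, le_refl k, ?_⟩
    intro j hj
    simp only [hj, iff_true]
    exact hnotQ j hj (hex j hj)
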